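/- For every real x with 0 ≤ x ≤ 1 and the pure state E₁₁ = |1⟩⟨1| (the 3×3 matrix unit with 1 in the (1,1) entry): Λ_x(E₁₁) = diag(1−x, x/2, x/2) and Λ_x^c(E₁₁) = diag(1−x, 0, x/2, x/2); in particular the two outputs have the same nonzero eigenvalues, so the coherent information of Λ_x at this pure input state is zero. -/

import Mathlib

open Matrix

/-- The interpolated Landau–Streater/Werner–Holevo channel
`Λ_x(ρ) = (1−x)·ρ + (x/2)·(Tr(ρ)·I₃ − ρᵀ)`. -/
noncomputable def Lam (x : ℝ) (ρ : Matrix (Fin 3) (Fin 3) ℂ) : Matrix (Fin 3) (Fin 3) ℂ :=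
  ((1 : ℂ) - (x : ℂ)) • ρ + ((x : ℂ) / 2) • (ρ.trace • (1 : Matrix (Fin 3) (Fin 3) ℂ) - ρᵀ)

/-- The Kraus operators of the channel `Λ_x`:
`K₀ = √(1−x)·I₃` and `K_a = −i·√(x/2)·J_a` for `a = 1,2,3`. -/
noncomputable def K (x : ℝ) : Fin 4 → Matrix (Fin 3) (Fin 3) ℂ :=
  ![(Real.sqrt (1 - x) : ℂ) • (1 : Matrix (Fin 3) (Fin 3) ℂ),
    (-Complex.I) • (Real.sqrt (x / 2) : ℂ) • !![0, 0, 0; 0, 0, 1; 0, -1, 0],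
    (-Complex.I) • (Real.sqrt (x / 2) : ℂ) • !![0, 0, -1; 0, 0, 0; 1, 0, 0],
    (-Complex.I) • (Real.sqrt (x / 2) : ℂ) • !![0, 1, 0; -1, 0, 0; 0, 0, 0]]

/-- The complementary channel `Λ_x^c`, with entries `(Λ_x^c(ρ))_{αβ} = Tr(K_α ρ K_β†)`. -/
noncomputable def LamC (x : ℝ) (ρ : Matrix (Fin 3) (Fin 3) ℂ) : Matrix (Fin 4) (Fin 4) ℂ :=
  Matrix.of fun α β => (K x α * ρ * (K x β)ᴴ).trace

/-- On the pure state `E₁₁ = |1⟩⟨1|`: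
`Λ_x(E₁₁) = diag(1−x, x/2, x/2)` and `Λ_x^c(E₁₁) = diag(1−x, 0, x/2, x/2)`;
the two outputs have the same nonzero eigenvalues, so the coherent information
of `Λ_x` at this input is zero. -/
theorem lam_and_lamC_on_E11 (x : ℝ) (hx0 : 0 ≤ x) (hx1 : x ≤ 1) :
    Lam x (Matrix.single 0 0 (1 : ℂ)) =
      Matrix.diagonal ![1 - (x : ℂ), (x : ℂ) / 2, (x : ℂ) / 2] ∧
    LamC x (Matrix.single 0 0 (1 : ℂ)) =
      Matrix.diagonal ![1 - (x : ℂ), 0, (x : ℂ) / 2, (x : ℂ) / 2] := by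
  have h1 : (Real.sqrt (1 - x) : ℂ) * (Real.sqrt (1 - x) : ℂ) = 1 - (x:ℂ) := by
    rw [← Complex.ofReal_mul, Real.mul_self_sqrt (by linarith)]
    push_cast; ring
  have h2 : (Real.sqrt (x / 2) : ℂ) * (Real.sqrt (x / 2) : ℂ) = (x:ℂ) / 2 := by
    rw [← Complex.ofReal_mul, Real.mul_self_sqrt (by linarith)]
    push_cast; ring
  constructor
  · ext i j
    fin_cases i <;> fin_cases j <;>
      simp [Lam, Matrix.single, Matrix.trace, Matrix.diagonal, Matrix.one_apply,
        Fin.sum_univ_succ, Matrix.transpose_apply] <;> ring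
  · ext i j
    fin_cases i <;> fin_cases j <;>
      simp [LamC, K, Matrix.single, Matrix.trace, Matrix.diagonal, Matrix.mul_apply,
        Matrix.one_apply, Fin.sum_univ_succ, Matrix.conjTranspose_apply, h1, h2] <;>
      ring_nf <;>
      simp [Matrix.vecHead, Matrix.vecTail, inv_pow, ← Complex.ofReal_pow,
        Real.sq_sqrt hx0, Real.sq_sqrt two_pos.le] <;> ring
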